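/- arXiv:1907.04535 — 11 statements merged into one kernel-verified Lean document; each statement's English description precedes it below -/
import Mathlib

section
/- A subset S of vertices of a connected graph G is a general position set if and only if the components of the subgraph of G induced by S are complete subgraphs whose vertex sets form an intransitive, distance-constant partition of S. -/
/-- `S` is a general position set of `G`: no three distinct vertices of `S`
lie on a common geodesic. -/
def isGPSet {V : Type*} (G : SimpleGraph V) (S : Set V) : Prop :=
  ∀ u ∈ S, ∀ v ∈ S, ∀ w ∈ S, u ≠ v → v ≠ w → u ≠ w →
    G.dist u v ≠ G.dist u w + G.dist w v

lemma gp_clique {V : Type*} [Fintype V] (G : SimpleGraph V) (hG : G.Connected)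
    (S : Set V) (h : isGPSet G S) :
    ∀ {u v : S}, (G.induce S).Walk u v → u = v ∨ G.Adj (u : V) (v : V) := by
  intro u v w
  induction w with
  | nil => exact Or.inl rfl
  | @cons a b c hab p ih =>
    rcases ih with rfl | hbc
    · exact Or.inr hab
    · by_cases hac : a = c
      · exact Or.inl hac
      · right
        by_cases hab' : a = b
        · subst hab'; exact hbc
        · by_contra hadj
          have hd1 : G.dist (a : V) (b : V) = 1 :=
            SimpleGraph.dist_eq_one_iff_adj.mpr hab
          have hd2 : G.dist (b : V) (c : V) = 1 :=
            SimpleGraph.dist_eq_one_iff_adj.mpr hbc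
          have htri : G.dist (a : V) (c : V) ≤ G.dist (a : V) b + G.dist (b : V) c :=
            hG.dist_triangle
          have hpos : 0 < G.dist (a : V) (c : V) :=
            hG.pos_dist_of_ne (by simpa [Subtype.ext_iff] using hac)
          have hne1 : G.dist (a : V) (c : V) ≠ 1 := by
            intro h1
            exact hadj (SimpleGraph.dist_eq_one_iff_adj.mp h1)
          have hgp := h a a.2 c c.2 b b.2
            (by simpa [Subtype.ext_iff] using hac)
            hbc.ne'
            (by simpa [Subtype.ext_iff] using hab')
          rw [hd1, hd2] at htri
          rw [hd1, hd2] at hgp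
          omega

lemma gp_dc {V : Type*} [Fintype V] (G : SimpleGraph V) (hG : G.Connected)
    (S : Set V) (h : isGPSet G S) (u u' v : S)
    (huu' : u = u' ∨ G.Adj (u : V) (u' : V))
    (huv : (u : V) ≠ v) (hu'v : (u' : V) ≠ v) :
    G.dist (u : V) v = G.dist (u' : V) v := by
  rcases huu' with rfl | hadj
  · rfl
  · have hd1 : G.dist (u : V) (u' : V) = 1 := SimpleGraph.dist_eq_one_iff_adj.mpr hadj
    have hd1' : G.dist (u' : V) (u : V) = 1 := by
      rw [SimpleGraph.dist_comm]; exact hd1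
    have ht1 : G.dist (u : V) v ≤ G.dist (u : V) u' + G.dist (u' : V) v := hG.dist_triangle
    have ht2 : G.dist (u' : V) v ≤ G.dist (u' : V) u + G.dist (u : V) v := hG.dist_triangle
    have hg1 := h u u.2 v v.2 u' u'.2 (by simpa [Subtype.ext_iff] using huv)
      (by simpa [Subtype.ext_iff] using hu'v.symm)
      (by simpa [Subtype.ext_iff] using hadj.ne)
    have hg2 := h u' u'.2 v v.2 u u.2 (by simpa [Subtype.ext_iff] using hu'v)
      (by simpa [Subtype.ext_iff] using huv.symm)
      (by simpa [Subtype.ext_iff] using hadj.ne')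
    rw [hd1] at ht1 hg1
    rw [hd1'] at ht2 hg2
    omega

theorem stmt_0 {V : Type*} [Fintype V] (G : SimpleGraph V) (hG : G.Connected)
    (S : Set V) :
    isGPSet G S ↔
      ((∀ u v : S, (G.induce S).connectedComponentMk u = (G.induce S).connectedComponentMk v →
          u ≠ v → G.Adj u v) ∧
       (∀ u u' v v' : S,
          (G.induce S).connectedComponentMk u = (G.induce S).connectedComponentMk u' →
          (G.induce S).connectedComponentMk v = (G.induce S).connectedComponentMk v' →
          (G.induce S).connectedComponentMk u ≠ (G.induce S).connectedComponentMk v →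
          G.dist (u : V) v = G.dist (u' : V) v') ∧
       (∀ u v w : S,
          (G.induce S).connectedComponentMk u ≠ (G.induce S).connectedComponentMk v →
          (G.induce S).connectedComponentMk v ≠ (G.induce S).connectedComponentMk w →
          (G.induce S).connectedComponentMk u ≠ (G.induce S).connectedComponentMk w →
          G.dist (u : V) w ≠ G.dist (u : V) v + G.dist (v : V) w)) := by
  constructor
  · intro h
    have hsame : ∀ u v : S,
        (G.induce S).connectedComponentMk u = (G.induce S).connectedComponentMk v →
        u = v ∨ G.Adj (u : V) (v : V) := by
      intro u v hc
      obtain ⟨w⟩ := SimpleGraph.ConnectedComponent.eq.mp hc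
      exact gp_clique G hG S h w
    have hdiffne : ∀ u v : S,
        (G.induce S).connectedComponentMk u ≠ (G.induce S).connectedComponentMk v →
        (u : V) ≠ (v : V) := by
      intro u v hc hne
      exact hc (by rw [Subtype.ext hne])
    refine ⟨?_, ?_, ?_⟩
    · intro u v hc hne
      rcases hsame u v hc with rfl | hadj
      · exact absurd rfl hne
      · exact hadj
    · intro u u' v v' hu hv huv
      have h1 : G.dist (u : V) v = G.dist (u' : V) v :=
        gp_dc G hG S h u u' v (hsame u u' hu) (hdiffne u v huv)
          (hdiffne u' v (hu ▸ huv))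
      have huv' : (G.induce S).connectedComponentMk u ≠ (G.induce S).connectedComponentMk v' :=
        fun hh => huv (hh.trans hv.symm)
      have h2 : G.dist (v : V) u' = G.dist (v' : V) u' :=
        gp_dc G hG S h v v' u' (hsame v v' hv)
          (hdiffne v u' (fun hh => huv (hu.trans hh.symm)))
          (hdiffne v' u' (fun hh => huv' (hu.trans hh.symm)))
      rw [h1, SimpleGraph.dist_comm, h2, SimpleGraph.dist_comm]
    · intro u v w huv hvw huw
      exact h u u.2 w w.2 v v.2 (hdiffne u w huw) ((hdiffne v w hvw).symm)
        (hdiffne u v huv)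
  · rintro ⟨h1, h2, h3⟩
    intro u hu v hv w hw huv hvw huw heq
    set cu := (G.induce S).connectedComponentMk ⟨u, hu⟩ with hcu
    set cv := (G.induce S).connectedComponentMk ⟨v, hv⟩ with hcv
    set cw := (G.induce S).connectedComponentMk ⟨w, hw⟩ with hcw
    by_cases huv' : cu = cv
    · -- u,v same component: dist u v = 1
      have hduv : G.dist u v = 1 := SimpleGraph.dist_eq_one_iff_adj.mpr
        (h1 ⟨u, hu⟩ ⟨v, hv⟩ huv' (by simpa [Subtype.ext_iff] using huv))
      by_cases huw' : cu = cw
      · -- all same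
        have hvw' : cv = cw := huv'.symm.trans huw'
        have hduw : G.dist u w = 1 := SimpleGraph.dist_eq_one_iff_adj.mpr
          (h1 ⟨u, hu⟩ ⟨w, hw⟩ huw' (by simpa [Subtype.ext_iff] using huw))
        have hdwv : G.dist w v = 1 := SimpleGraph.dist_eq_one_iff_adj.mpr
          (h1 ⟨w, hw⟩ ⟨v, hv⟩ hvw'.symm (by simpa [Subtype.ext_iff, eq_comm] using hvw))
        omega
      · -- u,v same, w different
        have : G.dist u w = G.dist v w :=
          h2 ⟨u, hu⟩ ⟨v, hv⟩ ⟨w, hw⟩ ⟨w, hw⟩ huv' rfl huw'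
        have hwvpos : 0 < G.dist w v := hG.pos_dist_of_ne (Ne.symm hvw)
        rw [this, SimpleGraph.dist_comm (u := v)] at heq
        omega
    · by_cases huw' : cu = cw
      · -- u,w same, v different
        have hduw : G.dist u w = 1 := SimpleGraph.dist_eq_one_iff_adj.mpr
          (h1 ⟨u, hu⟩ ⟨w, hw⟩ huw' (by simpa [Subtype.ext_iff] using huw))
        have : G.dist u v = G.dist w v :=
          h2 ⟨u, hu⟩ ⟨w, hw⟩ ⟨v, hv⟩ ⟨v, hv⟩ huw' rfl huv'
        omega
      · by_cases hvw' : cv = cw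
        · -- v,w same, u different
          have hdwv : G.dist w v = 1 := SimpleGraph.dist_eq_one_iff_adj.mpr
            (h1 ⟨w, hw⟩ ⟨v, hv⟩ hvw'.symm (by simpa [Subtype.ext_iff, eq_comm] using hvw))
          have : G.dist u v = G.dist u w := by
            rw [SimpleGraph.dist_comm, SimpleGraph.dist_comm (u := u) (v := w)]
            exact h2 ⟨v, hv⟩ ⟨w, hw⟩ ⟨u, hu⟩ ⟨u, hu⟩ hvw' rfl (fun hh => huv' hh.symm)
          omega
        · -- all different: h3 with order u w v? h3 gives dist u w ≠ dist u v + dist v w.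
          -- we have dist u v = dist u w + dist w v. Use h3 at (u, w, v):
          exact h3 ⟨u, hu⟩ ⟨w, hw⟩ ⟨v, hv⟩ huw' (fun hh => hvw' hh.symm) huv' heq
end

section
/- If G is a bipartite connected graph whose general position number is at least 3, then every maximum general position set of G is an independent set. -/
/-- The general position number of `G`: the largest size of a general position set. -/
noncomputable def gpNum {V : Type*} (G : SimpleGraph V) : ℕ :=
  sSup {n | ∃ S : Finset V, isGPSet G ↑S ∧ S.card = n}

private lemma fin2_helper : ∀ a b d : Fin 2, a ≠ b → (a = d ↔ ¬ b = d) := by decide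

lemma walk_parity {V : Type*} {G : SimpleGraph V} (c : G.Coloring (Fin 2)) {x y : V}
    (p : G.Walk x y) : (c x = c y) ↔ Even p.length := by
  induction p with
  | nil => simp
  | cons h p ih =>
    rw [SimpleGraph.Walk.length_cons, Nat.even_add_one, ← ih,
      fin2_helper _ _ _ (c.valid h)]

lemma dist_parity {V : Type*} {G : SimpleGraph V} (c : G.Coloring (Fin 2))
    (hG : G.Connected) (x y : V) : (c x = c y) ↔ Even (G.dist x y) := by
  obtain ⟨p, hp⟩ := hG.exists_walk_length_eq_dist x y
  rw [← hp]; exact walk_parity c p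

theorem stmt_1 {V : Type*} [Fintype V] (G : SimpleGraph V) (hG : G.Connected)
    (hbip : G.Colorable 2) (hgp : 3 ≤ gpNum G) :
    ∀ S : Finset V, isGPSet G ↑S → S.card = gpNum G →
      ∀ u ∈ S, ∀ v ∈ S, ¬ G.Adj u v := by
  classical
  intro S hS hcard u hu v hv hadj
  obtain ⟨c⟩ := hbip
  have huv : u ≠ v := G.ne_of_adj hadj
  -- find a third vertex
  have h3 : 3 ≤ S.card := hcard ▸ hgp
  have : ((S.erase u).erase v).Nonempty := by
    rw [← Finset.card_pos]
    have h1 := Finset.card_erase_of_mem hu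
    have h2 := Finset.card_erase_of_mem (Finset.mem_erase.mpr ⟨(Ne.symm huv), hv⟩)
    omega
  obtain ⟨w, hw⟩ := this
  have hwv : w ≠ v := (Finset.mem_erase.mp hw).1
  have hwu : w ≠ u := (Finset.mem_erase.mp (Finset.mem_erase.mp hw).2).1
  have hwS : w ∈ S := (Finset.mem_erase.mp (Finset.mem_erase.mp hw).2).2
  have hduv : G.dist u v = 1 := SimpleGraph.dist_eq_one_iff_adj.mpr hadj
  have hcuv : c u ≠ c v := c.valid hadj
  -- parity of distances to w differ
  have hpar : ¬ (Even (G.dist u w) ↔ Even (G.dist v w)) := by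
    rw [← dist_parity c hG, ← dist_parity c hG]
    rw [fin2_helper _ _ _ hcuv]
    tauto
  have hne : G.dist u w ≠ G.dist v w := fun h => hpar (by rw [h])
  have t1 : G.dist u w ≤ G.dist u v + G.dist v w := hG.dist_triangle
  have t2 : G.dist v w ≤ G.dist v u + G.dist u w := hG.dist_triangle
  have hdvu : G.dist v u = 1 := by rw [SimpleGraph.dist_comm]; exact hduv
  rw [hduv] at t1; rw [hdvu] at t2
  rcases Nat.lt_or_ge (G.dist u w) (G.dist v w) with hlt | hge
  · -- dist v w = dist u w + 1 = dist v u + dist u w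
    have heq : G.dist v w = 1 + G.dist u w := by omega
    exact hS v (by simpa using hv) w (by simpa using hwS) u (by simpa using hu)
      hwv.symm hwu (Ne.symm huv)
      (by rw [heq, hdvu])
  · have heq : G.dist u w = 1 + G.dist v w := by omega
    exact hS u (by simpa using hu) w (by simpa using hwS) v (by simpa using hv)
      hwu.symm hwv huv
      (by rw [heq, hduv])
end

section
/- If {H_1, …, H_k} is an isometric cover of a connected graph G, then gp(G) ≤ gp(H_1) + ⋯ + gp(H_k). -/
lemma gpSet_card_le {V : Type*} [Fintype V] (G : SimpleGraph V) (S : Finset V)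
    (hS : isGPSet G ↑S) : S.card ≤ gpNum G := by
  classical
  apply le_csSup
  · exact ⟨Fintype.card V, by rintro n ⟨T, _, rfl⟩; exact T.card_le_univ⟩
  · exact ⟨S, hS, rfl⟩

theorem stmt_2 {V : Type*} [Fintype V] (G : SimpleGraph V) (hG : G.Connected)
    (k : ℕ) (H : Fin k → G.Subgraph)
    (hiso : ∀ i, ∀ u v : (H i).verts, ((H i).coe.dist u v = G.dist (u : V) v))
    (hcover : ∀ v : V, ∃ i, v ∈ (H i).verts) :
    gpNum G ≤ ∑ i, gpNum (H i).coe := by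
  classical
  have hne : {n | ∃ S : Finset V, isGPSet G ↑S ∧ S.card = n}.Nonempty :=
    ⟨0, ∅, by intro u hu; simp at hu, by simp⟩
  apply csSup_le hne
  rintro n ⟨S, hS, rfl⟩
  set f : V → Fin k := fun v => (hcover v).choose with hf
  have hfv : ∀ v, v ∈ (H (f v)).verts := fun v => (hcover v).choose_spec
  rw [Finset.card_eq_sum_card_fiberwise (f := f) (t := Finset.univ)
    (fun x _ => Finset.mem_univ _)]
  apply Finset.sum_le_sum
  intro i _
  haveI : Fintype ((H i).verts : Set V) := Fintype.ofFinite _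
  set T : Finset ((H i).verts : Set V) :=
    (S.filter (fun v => f v = i)).subtype (· ∈ (H i).verts) with hT
  have hcard : (S.filter (fun v => f v = i)).card = T.card := by
    rw [hT, Finset.card_subtype, Finset.filter_filter]
    congr 1
    apply Finset.filter_congr
    intro x hx
    constructor
    · exact fun h => ⟨h, h ▸ hfv x⟩
    · exact fun h => h.1
  rw [hcard]
  apply gpSet_card_le
  intro u hu v hv w hw huv hvw huw
  rw [Finset.mem_coe, hT, Finset.mem_subtype, Finset.mem_filter] at hu hv hw
  rw [hiso i u v, hiso i u w, hiso i w v]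
  exact hS u hu.1 v hv.1 w hw.1 (fun h => huv (Subtype.ext h))
    (fun h => hvw (Subtype.ext h)) (fun h => huw (Subtype.ext h))
end

section
/- For all r ≥ 3 and s ≥ 3, the general position number of the grid graph P_r □ P_s equals 4. -/
open SimpleGraph

lemma pathGraph_connected' {n : ℕ} (h : 0 < n) : (pathGraph n).Connected := by
  obtain ⟨m, rfl⟩ := Nat.exists_eq_succ_of_ne_zero h.ne'
  exact pathGraph_connected m

lemma pathGraph_dist_le {n : ℕ} : ∀ (d : ℕ) (i j : Fin n), Nat.dist i.val j.val = d →
    (pathGraph n).dist i j ≤ d := by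
  intro d
  induction d with
  | zero =>
    intro i j h
    have : i = j := Fin.ext (Nat.eq_of_dist_eq_zero h)
    subst this
    simp
  | succ d ih =>
    intro i j h
    have hcon : (pathGraph n).Connected := pathGraph_connected' i.pos
    have hne : i.val ≠ j.val := by simp [Nat.dist] at h ⊢; omega
    rcases lt_or_gt_of_ne hne with hlt | hgt
    · have h1 : i.val + 1 < n := lt_of_le_of_lt hlt j.isLt
      set i' : Fin n := ⟨i.val + 1, h1⟩ with hi'
      have hadj : (pathGraph n).Adj i i' := pathGraph_adj.mpr (Or.inl rfl)
      have h2 : (pathGraph n).dist i i' ≤ 1 := by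
        have := SimpleGraph.dist_le hadj.toWalk
        simpa using this
      have h3 : (pathGraph n).dist i' j ≤ d := by
        apply ih
        simp [Nat.dist, hi'] at h ⊢; omega
      calc (pathGraph n).dist i j ≤ _ + _ := hcon.dist_triangle (v := i')
        _ ≤ 1 + d := Nat.add_le_add h2 h3
        _ = d + 1 := by omega
    · have h1 : i.val - 1 < n := lt_trans (by omega) i.isLt
      set i' : Fin n := ⟨i.val - 1, h1⟩ with hi'
      have hadj : (pathGraph n).Adj i i' := by
        apply pathGraph_adj.mpr (Or.inr ?_)
        simp [hi']; omega
      have h2 : (pathGraph n).dist i i' ≤ 1 := by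
        have := SimpleGraph.dist_le hadj.toWalk
        simpa using this
      have h3 : (pathGraph n).dist i' j ≤ d := by
        apply ih
        simp [Nat.dist, hi'] at h ⊢; omega
      calc (pathGraph n).dist i j ≤ _ + _ := hcon.dist_triangle (v := i')
        _ ≤ 1 + d := Nat.add_le_add h2 h3
        _ = d + 1 := by omega

lemma natdist_le_walk {n : ℕ} {i j : Fin n} (p : (pathGraph n).Walk i j) :
    Nat.dist i.val j.val ≤ p.length := by
  induction p with
  | nil => simp [Nat.dist]
  | @cons u v w h p ih =>
    have hadj := pathGraph_adj.mp h
    rw [SimpleGraph.Walk.length_cons]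
    simp [Nat.dist] at ih ⊢
    omega

lemma pathGraph_dist {n : ℕ} (i j : Fin n) :
    (pathGraph n).dist i j = Nat.dist i.val j.val := by
  refine le_antisymm (pathGraph_dist_le _ i j rfl) ?_
  have hcon : (pathGraph n).Connected := pathGraph_connected' i.pos
  obtain ⟨p, hp⟩ := hcon.exists_walk_length_eq_dist i j
  rw [← hp]
  exact natdist_le_walk p

lemma boxProd_walk_ge {α β : Type*} {G : SimpleGraph α} {H : SimpleGraph β}
    (hG : G.Connected) (hH : H.Connected) {x y : α × β} (p : (G □ H).Walk x y) :
    G.dist x.1 y.1 + H.dist x.2 y.2 ≤ p.length := by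
  induction p with
  | nil => simp
  | @cons u v w h p ih =>
    rw [SimpleGraph.Walk.length_cons]
    rcases SimpleGraph.boxProd_adj.mp h with ⟨ha, he⟩ | ⟨ha, he⟩
    · have h1 : G.dist u.1 w.1 ≤ G.dist u.1 v.1 + G.dist v.1 w.1 := hG.dist_triangle
      have h2 : G.dist u.1 v.1 ≤ 1 := by simpa using SimpleGraph.dist_le ha.toWalk
      rw [he]
      omega
    · have h1 : H.dist u.2 w.2 ≤ H.dist u.2 v.2 + H.dist v.2 w.2 := hH.dist_triangle
      have h2 : H.dist u.2 v.2 ≤ 1 := by simpa using SimpleGraph.dist_le ha.toWalk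
      rw [he]
      omega

lemma boxProd_dist {α β : Type*} {G : SimpleGraph α} {H : SimpleGraph β}
    (hG : G.Connected) (hH : H.Connected) (x y : α × β) :
    (G □ H).dist x y = G.dist x.1 y.1 + H.dist x.2 y.2 := by
  obtain ⟨a, b⟩ := x
  obtain ⟨c, d⟩ := y
  refine le_antisymm ?_ ?_
  · obtain ⟨p1, hp1⟩ := hG.exists_walk_length_eq_dist a c
    obtain ⟨p2, hp2⟩ := hH.exists_walk_length_eq_dist b d
    have := SimpleGraph.dist_le ((p1.boxProdLeft H b).append (p2.boxProdRight G c))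
    refine this.trans (le_of_eq ?_)
    have e1 : (p1.boxProdLeft H b).length = p1.length := SimpleGraph.Walk.length_map _ _
    have e2 : (p2.boxProdRight G c).length = p2.length := SimpleGraph.Walk.length_map _ _
    rw [SimpleGraph.Walk.length_append, e1, e2, hp1, hp2]
  · obtain ⟨p, hp⟩ := (hG.boxProd hH).exists_walk_length_eq_dist (a, b) (c, d)
    rw [← hp]
    exact boxProd_walk_ge hG hH p

lemma exists_mono3 (y : Fin 5 → ℕ) : ∃ i j k : Fin 5, i < j ∧ j < k ∧
    ((y i ≤ y j ∧ y j ≤ y k) ∨ (y k ≤ y j ∧ y j ≤ y i)) := by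
  have h : ∀ a b c d e : ℕ,
      ((a ≤ b ∧ b ≤ c) ∨ (c ≤ b ∧ b ≤ a)) ∨
      ((a ≤ b ∧ b ≤ d) ∨ (d ≤ b ∧ b ≤ a)) ∨
      ((a ≤ b ∧ b ≤ e) ∨ (e ≤ b ∧ b ≤ a)) ∨
      ((a ≤ c ∧ c ≤ d) ∨ (d ≤ c ∧ c ≤ a)) ∨
      ((a ≤ c ∧ c ≤ e) ∨ (e ≤ c ∧ c ≤ a)) ∨
      ((a ≤ d ∧ d ≤ e) ∨ (e ≤ d ∧ d ≤ a)) ∨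
      ((b ≤ c ∧ c ≤ d) ∨ (d ≤ c ∧ c ≤ b)) ∨
      ((b ≤ c ∧ c ≤ e) ∨ (e ≤ c ∧ c ≤ b)) ∨
      ((b ≤ d ∧ d ≤ e) ∨ (e ≤ d ∧ d ≤ b)) ∨
      ((c ≤ d ∧ d ≤ e) ∨ (e ≤ d ∧ d ≤ c)) := by
    intro a b c d e; omega
  rcases h (y 0) (y 1) (y 2) (y 3) (y 4) with H|H|H|H|H|H|H|H|H|H
  · exact ⟨0, 1, 2, by decide, by decide, H⟩
  · exact ⟨0, 1, 3, by decide, by decide, H⟩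
  · exact ⟨0, 1, 4, by decide, by decide, H⟩
  · exact ⟨0, 2, 3, by decide, by decide, H⟩
  · exact ⟨0, 2, 4, by decide, by decide, H⟩
  · exact ⟨0, 3, 4, by decide, by decide, H⟩
  · exact ⟨1, 2, 3, by decide, by decide, H⟩
  · exact ⟨1, 2, 4, by decide, by decide, H⟩
  · exact ⟨1, 3, 4, by decide, by decide, H⟩
  · exact ⟨2, 3, 4, by decide, by decide, H⟩

lemma gp_card_le {r s : ℕ} (hr : 0 < r) (hs : 0 < s) (S : Finset (Fin r × Fin s))
    (hS : isGPSet ((pathGraph r) □ (pathGraph s)) ↑S) : S.card ≤ 4 := by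
  by_contra hcard
  push_neg at hcard
  obtain ⟨T, hTS, hT5⟩ := Finset.exists_subset_card_eq hcard
  have hTS' : ∀ z ∈ T, z ∈ S := fun z hz => hTS hz
  set T' : Finset (Lex (Fin r × Fin s)) := T.image toLex with hT'
  have hT'5 : T'.card = 5 := by
    rw [hT', Finset.card_image_of_injective _ toLex.injective, hT5]
  let f := T'.orderIsoOfFin hT'5
  set p : Fin 5 → Fin r × Fin s := fun i => ofLex (f i).val with hp
  have hpS : ∀ i, p i ∈ S := by
    intro i
    obtain ⟨z, hz, hze⟩ := Finset.mem_image.mp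
      (show (f i).val ∈ Finset.image toLex T from (f i).2)
    have : p i = z := by rw [hp]; simp [← hze]
    rw [this]; exact hTS' z hz
  have hmono : ∀ i j : Fin 5, i < j → toLex (p i) < toLex (p j) := by
    intro i j hij
    have := f.strictMono hij
    simpa [hp] using this
  have hinj : ∀ i j : Fin 5, i ≠ j → p i ≠ p j := by
    intro i j hij he
    exact hij (f.injective (Subtype.ext (toLex.injective (by simpa [hp] using he))))
  have hfst : ∀ i j : Fin 5, i < j → (p i).1.val ≤ (p j).1.val := by
    intro i j hij
    have := hmono i j hij
    rw [Prod.Lex.lt_iff] at this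
    rcases this with h | ⟨h, _⟩
    · exact le_of_lt h
    · exact le_of_eq (congrArg Fin.val h)
  obtain ⟨i, j, k, hij, hjk, hy⟩ := exists_mono3 (fun i => ((p i).2 : ℕ))
  set u := p i; set w := p j; set v := p k
  have hconr := pathGraph_connected' hr
  have hcons := pathGraph_connected' hs
  have hd : ∀ a b : Fin r × Fin s, ((pathGraph r) □ (pathGraph s)).dist a b =
      Nat.dist a.1.val b.1.val + Nat.dist a.2.val b.2.val := by
    intro a b
    rw [boxProd_dist hconr hcons, pathGraph_dist, pathGraph_dist]
  have h1 : u.1.val ≤ w.1.val := hfst i j hij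
  have h2 : w.1.val ≤ v.1.val := hfst j k hjk
  apply hS u (hpS i) v (hpS k) w (hpS j) (hinj i k (by omega : i ≠ k))
    (hinj k j (ne_of_gt hjk)) (hinj i j (ne_of_lt hij))
  · rw [hd, hd, hd]
    simp only [Nat.dist] at *
    omega

theorem stmt_3 (r s : ℕ) (hr : 3 ≤ r) (hs : 3 ≤ s) :
    gpNum ((SimpleGraph.pathGraph r).boxProd (SimpleGraph.pathGraph s)) = 4 := by
  have hr0 : 0 < r := by omega
  have hs0 : 0 < s := by omega
  have hconr := pathGraph_connected' hr0
  have hcons := pathGraph_connected' hs0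
  have hd : ∀ a b : Fin r × Fin s, ((pathGraph r) □ (pathGraph s)).dist a b =
      Nat.dist a.1.val b.1.val + Nat.dist a.2.val b.2.val := by
    intro a b
    rw [boxProd_dist hconr hcons, pathGraph_dist, pathGraph_dist]
  -- the diamond
  set a : Fin r × Fin s := (⟨0, by omega⟩, ⟨1, by omega⟩) with ha
  set b : Fin r × Fin s := (⟨1, by omega⟩, ⟨0, by omega⟩) with hb
  set c : Fin r × Fin s := (⟨1, by omega⟩, ⟨2, by omega⟩) with hc
  set e : Fin r × Fin s := (⟨2, by omega⟩, ⟨1, by omega⟩) with he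
  set S₀ : Finset (Fin r × Fin s) := {a, b, c, e} with hS₀
  have hmem : ∀ z ∈ S₀, z = a ∨ z = b ∨ z = c ∨ z = e := by
    intro z hz
    simp [hS₀] at hz
    tauto
  have hdist2 : ∀ x ∈ S₀, ∀ y ∈ S₀, x ≠ y →
      ((pathGraph r) □ (pathGraph s)).dist x y = 2 := by
    intro x hx y hy hxy
    rcases hmem x hx with rfl | rfl | rfl | rfl <;>
      rcases hmem y hy with rfl | rfl | rfl | rfl <;>
      first
        | exact absurd rfl hxy
        | (rw [hd]; simp [ha, hb, hc, he, Nat.dist])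
  have hGP : isGPSet ((pathGraph r) □ (pathGraph s)) ↑S₀ := by
    intro u hu v hv w hw huv hvw huw
    rw [hdist2 u hu v hv huv, hdist2 u hu w hw huw, hdist2 w hw v hv (Ne.symm hvw)]
    omega
  have hcard : S₀.card = 4 := by
    rw [hS₀]
    rw [Finset.card_insert_of_notMem, Finset.card_insert_of_notMem,
      Finset.card_insert_of_notMem, Finset.card_singleton]
    · simp [hc, he, Prod.ext_iff, Fin.ext_iff]
    · simp [hb, hc, he, Prod.ext_iff, Fin.ext_iff]
    · simp [ha, hb, hc, he, Prod.ext_iff, Fin.ext_iff]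
  have hbdd : ∀ n ∈ {n | ∃ S : Finset (Fin r × Fin s),
      isGPSet ((pathGraph r) □ (pathGraph s)) ↑S ∧ S.card = n}, n ≤ 4 := by
    rintro n ⟨S, hS, rfl⟩
    exact gp_card_le hr0 hs0 S hS
  apply le_antisymm
  · exact csSup_le ⟨4, S₀, hGP, hcard⟩ hbdd
  · exact le_csSup ⟨4, fun n hn => hbdd n hn⟩ ⟨S₀, hGP, hcard⟩
end

section
/- In the grid P_r □ P_s with vertex set [r] × [s], a 4-element set {(a,π(a')),(b,π(b')),(c,π(c')),(d,π(d'))} with a<b<c<d in [r] and a'<b'<c'<d' in [s] and π a permutation of {a',b',c',d'} is a general position set if and only if the sequence (π(a'),π(b'),π(c'),π(d')) contains no monotone subsequence of length 3. -/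
/-- Manhattan distance on the grid `P_r □ P_s` with vertex set `Fin r × Fin s`. -/
def gridDist {r s : ℕ} (u v : Fin r × Fin s) : ℕ :=
  ((u.1 : ℤ) - v.1).natAbs + ((u.2 : ℤ) - v.2).natAbs

/-- General position with respect to a distance function `d`. -/
def isGPSetD {α : Type*} (d : α → α → ℕ) (S : Set α) : Prop :=
  ∀ u ∈ S, ∀ v ∈ S, ∀ w ∈ S, u ≠ v → v ≠ w → u ≠ w → d u v ≠ d u w + d w v

lemma collin_aux {r s : ℕ} (x1 x2 x3 : Fin r) (y1 y2 y3 : Fin s)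
    (h12 : x1 < x2) (h23 : x2 < x3)
    (hy : (y1 ≤ y2 ∧ y2 ≤ y3) ∨ (y3 ≤ y2 ∧ y2 ≤ y1)) :
    gridDist (x1,y1) (x3,y3) = gridDist (x1,y1) (x2,y2) + gridDist (x2,y2) (x3,y3) := by
  simp only [gridDist]
  rw [Fin.lt_def] at h12 h23
  rcases hy with ⟨h1,h2⟩|⟨h1,h2⟩ <;> rw [Fin.le_def] at h1 h2 <;> omega

theorem stmt_6 (r s : ℕ) (a b c d : Fin r) (a' b' c' d' : Fin s)
    (hab : a < b) (hbc : b < c) (hcd : c < d)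
    (hab' : a' < b') (hbc' : b' < c') (hcd' : c' < d')
    (π : Fin s → Fin s) (hπ : Set.BijOn π {a', b', c', d'} {a', b', c', d'}) :
    isGPSetD (gridDist (r := r) (s := s))
        {(a, π a'), (b, π b'), (c, π c'), (d, π d')} ↔
      ¬ ∃ i j k : Fin 4, i < j ∧ j < k ∧
        ((![π a', π b', π c', π d'] i ≤ ![π a', π b', π c', π d'] j ∧
          ![π a', π b', π c', π d'] j ≤ ![π a', π b', π c', π d'] k) ∨
         (![π a', π b', π c', π d'] k ≤ ![π a', π b', π c', π d'] j ∧
          ![π a', π b', π c', π d'] j ≤ ![π a', π b', π c', π d'] i)) := by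
  have hxab : (a:ℕ) < b := hab
  have hxbc : (b:ℕ) < c := hbc
  have hxcd : (c:ℕ) < d := hcd
  have neAB : (a, π a') ≠ (b, π b') := fun h => absurd (congrArg Prod.fst h) (Fin.ne_of_lt hab)
  have neAC : (a, π a') ≠ (c, π c') := fun h => absurd (congrArg Prod.fst h) (Fin.ne_of_lt (hab.trans hbc))
  have neAD : (a, π a') ≠ (d, π d') := fun h => absurd (congrArg Prod.fst h) (Fin.ne_of_lt ((hab.trans hbc).trans hcd))
  have neBC : (b, π b') ≠ (c, π c') := fun h => absurd (congrArg Prod.fst h) (Fin.ne_of_lt hbc)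
  have neBD : (b, π b') ≠ (d, π d') := fun h => absurd (congrArg Prod.fst h) (Fin.ne_of_lt (hbc.trans hcd))
  have neCD : (c, π c') ≠ (d, π d') := fun h => absurd (congrArg Prod.fst h) (Fin.ne_of_lt hcd)
  constructor
  · intro hGP
    rintro ⟨i, j, k, hij, hjk, hC⟩
    fin_cases i <;> fin_cases j <;> fin_cases k <;>
      simp only [Fin.isValue, Matrix.cons_val_zero, Matrix.cons_val_one, Matrix.head_cons,
        Matrix.cons_val_two, Matrix.tail_cons, Matrix.cons_val_three, Matrix.head_fin_const] at hC <;>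
      first
      | exact absurd hij (by decide)
      | exact absurd hjk (by decide)
      | exact hGP (a, π a') (by simp) (c, π c') (by simp) (b, π b') (by simp)
          neAC neBC.symm neAB (collin_aux a b c _ _ _ hab hbc hC)
      | exact hGP (a, π a') (by simp) (d, π d') (by simp) (b, π b') (by simp)
          neAD neBD.symm neAB (collin_aux a b d _ _ _ hab (hbc.trans hcd) hC)
      | exact hGP (a, π a') (by simp) (d, π d') (by simp) (c, π c') (by simp)
          neAD neCD.symm neAC (collin_aux a c d _ _ _ (hab.trans hbc) hcd hC)
      | exact hGP (b, π b') (by simp) (d, π d') (by simp) (c, π c') (by simp)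
          neBD neCD.symm neBC (collin_aux b c d _ _ _ hbc hcd hC)
  · intro hNE
    have h012 : ¬((π a' ≤ π b' ∧ π b' ≤ π c') ∨ (π c' ≤ π b' ∧ π b' ≤ π a')) :=
      fun h => hNE ⟨0, 1, 2, by decide, by decide, by simpa using h⟩
    have h013 : ¬((π a' ≤ π b' ∧ π b' ≤ π d') ∨ (π d' ≤ π b' ∧ π b' ≤ π a')) :=
      fun h => hNE ⟨0, 1, 3, by decide, by decide, by simpa using h⟩
    have h023 : ¬((π a' ≤ π c' ∧ π c' ≤ π d') ∨ (π d' ≤ π c' ∧ π c' ≤ π a')) :=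
      fun h => hNE ⟨0, 2, 3, by decide, by decide, by simpa using h⟩
    have h123 : ¬((π b' ≤ π c' ∧ π c' ≤ π d') ∨ (π d' ≤ π c' ∧ π c' ≤ π b')) :=
      fun h => hNE ⟨1, 2, 3, by decide, by decide, by simpa using h⟩
    simp only [Fin.le_def, not_or, not_and, not_le, Fin.lt_def] at h012 h013 h023 h123
    intro u hu v hv w hw hne1 hne2 hne3
    simp only [Set.mem_insert_iff, Set.mem_singleton_iff] at hu hv hw
    rcases hu with rfl|rfl|rfl|rfl <;> rcases hv with rfl|rfl|rfl|rfl <;>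
      rcases hw with rfl|rfl|rfl|rfl <;>
      first
      | exact absurd rfl hne1
      | exact absurd rfl hne2
      | exact absurd rfl hne3
      | (simp only [gridDist]; omega)
end

section
/- Let r ≥ 2, s ≥ 3, and let S be a general position set of the cylinder P_r □ C_s with |S| ≥ 5. Then S is an independent set. -/
/-- Cyclic distance on the cycle `C_s` with vertex set `Fin s`. -/
def cycDist {s : ℕ} (k k' : Fin s) : ℕ :=
  min ((k : ℤ) - k').natAbs (s - ((k : ℤ) - k').natAbs)

/-- Distance on the cylinder `P_r □ C_s` with vertex set `Fin r × Fin s`. -/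
def cylDist {r s : ℕ} (u v : Fin r × Fin s) : ℕ :=
  ((u.1 : ℤ) - v.1).natAbs + cycDist u.2 v.2

lemma cylDist_symm' {r s : ℕ} (u v : Fin r × Fin s) : cylDist u v = cylDist v u := by
  have := u.2.isLt; have := v.2.isLt
  simp only [cylDist, cycDist]; omega

lemma cylDist_tri' {r s : ℕ} (u v w : Fin r × Fin s) :
    cylDist u w ≤ cylDist u v + cylDist v w := by
  have := u.2.isLt; have := v.2.isLt; have := w.2.isLt
  simp only [cylDist, cycDist]; omega

lemma cyc_unique' {s : ℕ} (k k' l l' : Fin s) (h : cycDist k k' = 1)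
    (h1 : cycDist k l = cycDist k' l) (h2 : cycDist k l' = cycDist k' l') : l = l' := by
  have a1 := k.isLt; have a2 := k'.isLt; have a3 := l.isLt; have a4 := l'.isLt
  apply Fin.ext
  simp only [cycDist] at h h1 h2
  omega

lemma cyl_to_cyc' {r s : ℕ} (u v w : Fin r × Fin s) (h1 : u.1 = v.1)
    (e1 : cylDist u w = cylDist v w) : cycDist u.2 w.2 = cycDist v.2 w.2 := by
  have h1' : u.1.val = v.1.val := congrArg Fin.val h1
  simp only [cylDist] at e1
  omega

lemma cyl_to_cyc1' {r s : ℕ} (u v : Fin r × Fin s) (h1 : u.1 = v.1)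
    (hd : cylDist u v = 1) : cycDist u.2 v.2 = 1 := by
  have h1' : u.1.val = v.1.val := congrArg Fin.val h1
  simp only [cylDist] at hd
  omega

lemma row_dist' {r s : ℕ} (w w' : Fin r × Fin s) (h : w.2 = w'.2) :
    cylDist w w' = ((w.1 : ℤ) - w'.1).natAbs := by
  have h' : w.2.val = w'.2.val := congrArg Fin.val h
  have := w.2.isLt
  simp only [cylDist, cycDist]; omega

theorem stmt_7 (r s : ℕ) (hr : 2 ≤ r) (hs : 3 ≤ s) (S : Finset (Fin r × Fin s))
    (hgp : isGPSetD (cylDist (r := r) (s := s)) ↑S) (hcard : 5 ≤ S.card) :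
    ∀ u ∈ S, ∀ v ∈ S, cylDist u v ≠ 1 := by
  intro u hu v hv hduv
  have huv : u ≠ v := by
    rintro rfl
    simp only [cylDist, cycDist] at hduv
    omega
  -- every other point of S is equidistant from u and v
  have key : ∀ w ∈ S, w ≠ u → w ≠ v → cylDist u w = cylDist v w := by
    intro w hw hwu hwv
    have t1 := cylDist_tri' u v w
    have t2 := cylDist_tri' v u w
    have g1 := hgp u (Finset.mem_coe.2 hu) w (Finset.mem_coe.2 hw) v (Finset.mem_coe.2 hv)
      (Ne.symm hwu) hwv huv
    have g2 := hgp v (Finset.mem_coe.2 hv) w (Finset.mem_coe.2 hw) u (Finset.mem_coe.2 hu)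
      (Ne.symm hwv) hwu huv.symm
    have hsy1 := cylDist_symm' v u
    have hsy2 := cylDist_symm' v w
    have hsy3 := cylDist_symm' u w
    omega
  -- extract three further points
  have hvT : v ∈ S.erase u := Finset.mem_erase.2 ⟨Ne.symm huv, hv⟩
  have hTcard : 3 ≤ ((S.erase u).erase v).card := by
    rw [Finset.card_erase_of_mem hvT, Finset.card_erase_of_mem hu]; omega
  obtain ⟨w1, hw1⟩ : ((S.erase u).erase v).Nonempty := Finset.card_pos.1 (by omega)
  obtain ⟨w2, hw2⟩ : (((S.erase u).erase v).erase w1).Nonempty :=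
    Finset.card_pos.1 (by rw [Finset.card_erase_of_mem hw1]; omega)
  obtain ⟨w3, hw3⟩ : ((((S.erase u).erase v).erase w1).erase w2).Nonempty := by
    apply Finset.card_pos.1
    rw [Finset.card_erase_of_mem hw2, Finset.card_erase_of_mem hw1]
    omega
  have hw3' := Finset.mem_erase.1 hw3
  have hw2' := Finset.mem_erase.1 hw2
  obtain ⟨h32, hw3T⟩ := hw3'
  have h31 : w3 ≠ w1 := (Finset.mem_erase.1 hw3T).1
  have hw3T' := (Finset.mem_erase.1 hw3T).2
  obtain ⟨h21, hw2T⟩ := hw2'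
  -- membership facts
  have m1 := Finset.mem_erase.1 hw1
  have m1' := Finset.mem_erase.1 m1.2
  have m2 := Finset.mem_erase.1 hw2T
  have m2' := Finset.mem_erase.1 m2.2
  have m3 := Finset.mem_erase.1 hw3T'
  have m3' := Finset.mem_erase.1 m3.2
  -- w1 ∈ S, w1 ≠ v, w1 ≠ u etc.
  have k1 := key w1 m1'.2 m1'.1 m1.1
  have k2 := key w2 m2'.2 m2'.1 m2.1
  have k3 := key w3 m3'.2 m3'.1 m3.1
  by_cases h1 : u.1 = v.1
  · -- vertical case: all three wᵢ lie in a common column → collinear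
    have hc1 := cyl_to_cyc1' u v h1 hduv
    have e1 := cyl_to_cyc' u v w1 h1 k1
    have e2 := cyl_to_cyc' u v w2 h1 k2
    have e3 := cyl_to_cyc' u v w3 h1 k3
    have q12 : w1.2 = w2.2 := cyc_unique' u.2 v.2 w1.2 w2.2 hc1 e1 e2
    have q13 : w1.2 = w3.2 := cyc_unique' u.2 v.2 w1.2 w3.2 hc1 e1 e3
    have q23 : w2.2 = w3.2 := q12.symm.trans q13
    -- first coordinates are pairwise distinct
    have n21 : w2.1 ≠ w1.1 := fun h => h21 (Prod.ext h q12.symm)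
    have n31 : w3.1 ≠ w1.1 := fun h => h31 (Prod.ext h q13.symm)
    have n32 : w3.1 ≠ w2.1 := fun h => h32 (Prod.ext h q23.symm)
    have g12 := hgp w1 (Finset.mem_coe.2 m1'.2) w2 (Finset.mem_coe.2 m2'.2) w3
      (Finset.mem_coe.2 m3'.2) (Ne.symm h21) (Ne.symm h32) (Ne.symm h31)
    have g13 := hgp w1 (Finset.mem_coe.2 m1'.2) w3 (Finset.mem_coe.2 m3'.2) w2
      (Finset.mem_coe.2 m2'.2) (Ne.symm h31) h32 (Ne.symm h21)
    have g23' := hgp w2 (Finset.mem_coe.2 m2'.2) w3 (Finset.mem_coe.2 m3'.2) w1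
      (Finset.mem_coe.2 m1'.2) (Ne.symm h32) h31 h21
    simp only [row_dist' w1 w2 q12, row_dist' w1 w3 q13, row_dist' w2 w3 q23,
      row_dist' w3 w2 q23.symm, row_dist' w2 w1 q12.symm, row_dist' w3 w1 q13.symm]
      at g12 g13 g23'
    have b1 := w1.1.isLt; have b2 := w2.1.isLt; have b3 := w3.1.isLt
    have v21 : w2.1.val ≠ w1.1.val := fun h => n21 (Fin.ext h)
    have v31 : w3.1.val ≠ w1.1.val := fun h => n31 (Fin.ext h)
    have v32 : w3.1.val ≠ w2.1.val := fun h => n32 (Fin.ext h)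
    omega
  · -- horizontal case: u.2 = v.2, and already one extra point gives a contradiction
    have hval : u.1.val ≠ v.1.val := fun h => h1 (Fin.ext h)
    have h2 : u.2 = v.2 := by
      apply Fin.ext
      have := u.2.isLt; have := v.2.isLt
      simp only [cylDist, cycDist] at hduv
      omega
    have h2' : u.2.val = v.2.val := congrArg Fin.val h2
    have b1 := u.2.isLt; have b2 := v.2.isLt; have b3 := w1.2.isLt
    simp only [cylDist, cycDist] at hduv k1
    omega
end

section
/- Let r ≥ 2, s ≥ 3, and let S be a general position set of P_r □ C_s with |S| ≥ 4. Then each C_s-layer contains at most 2 vertices of S; that is, for every i ∈ {0,…,r−1}, |S ∩ ({i} × V(C_s))| ≤ 2. -/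
/-- `m` lies on a geodesic between `x` and `y` on the cycle. -/
def Bt {s : ℕ} (x m y : Fin s) : Prop :=
  cycDist x y = cycDist x m + cycDist m y

lemma cycDist_comm {s : ℕ} (x y : Fin s) : cycDist x y = cycDist y x := by
  simp only [cycDist]; omega

lemma Bt_comm {s : ℕ} (x m y : Fin s) : Bt x m y ↔ Bt y m x := by
  unfold Bt
  rw [cycDist_comm x y, cycDist_comm x m, cycDist_comm m y, Nat.add_comm]

lemma inner {s : ℕ} (x m y : Fin s) (h1 : (x : ℕ) ≤ m) (h2 : (m : ℕ) ≤ y)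
    (h : 2 * ((y : ℕ) - x) ≤ s) : Bt x m y := by
  have hx := x.isLt; have hm := m.isLt; have hy := y.isLt
  simp only [Bt, cycDist]; omega

lemma outer {s : ℕ} (x m y : Fin s) (hxy : (x : ℕ) ≤ y)
    (hm : (m : ℕ) ≤ x ∨ (y : ℕ) ≤ m) (h : s ≤ 2 * ((y : ℕ) - x)) : Bt x m y := by
  have hx := x.isLt; have hm' := m.isLt; have hy := y.isLt
  simp only [Bt, cycDist]; omega

/-- Among four points (one distinguished `k`, three others `a b c`), some point of
`{a,b,c}` is the middle of a geodesic triple. -/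
def GP4 {s : ℕ} (k a b c : Fin s) : Prop :=
  Bt a b c ∨ Bt a c b ∨ Bt b a c ∨
  Bt k a b ∨ Bt k a c ∨ Bt k b a ∨ Bt k b c ∨ Bt k c a ∨ Bt k c b

lemma GP4_swap12 {s : ℕ} {k a b c : Fin s} (h : GP4 k a b c) : GP4 k b a c := by
  unfold GP4 at *
  rcases h with h|h|h|h|h|h|h|h|h <;>
    first | tauto | (rw [Bt_comm] at h; tauto)

lemma GP4_swap23 {s : ℕ} {k a b c : Fin s} (h : GP4 k a b c) : GP4 k a c b := by
  unfold GP4 at *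
  rcases h with h|h|h|h|h|h|h|h|h <;>
    first | tauto | (rw [Bt_comm] at h; tauto)

lemma GP4_sorted {s : ℕ} (k a b c : Fin s) (hab : (a : ℕ) ≤ b) (hbc : (b : ℕ) ≤ c) :
    GP4 k a b c := by
  unfold GP4
  rcases le_total (k : ℕ) (a : ℕ) with hk | hk
  · -- order k a b c ; pair (k, b), middles a / c
    rcases le_total (2 * ((b : ℕ) - k)) s with hcase | hcase
    · have := inner k a b hk hab hcase; tauto
    · have := outer k c b (hk.trans hab) (Or.inr hbc) hcase; tauto
  rcases le_total (k : ℕ) (b : ℕ) with hk2 | hk2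
  · -- order a k b c ; pair (k, c), middles b / a
    rcases le_total (2 * ((c : ℕ) - k)) s with hcase | hcase
    · have := inner k b c hk2 hbc hcase; tauto
    · have := outer k a c (hk2.trans hbc) (Or.inl hk) hcase; tauto
  rcases le_total (k : ℕ) (c : ℕ) with hk3 | hk3
  · -- order a b k c ; pair (a, k), middles b / c
    rcases le_total (2 * ((k : ℕ) - a)) s with hcase | hcase
    · have := inner a b k hab hk2 hcase; rw [Bt_comm] at this; tauto
    · have := outer a c k hk (Or.inr hk3) hcase; rw [Bt_comm] at this; tauto
  · -- order a b c k ; pair (b, k), middles c / a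
    rcases le_total (2 * ((k : ℕ) - b)) s with hcase | hcase
    · have := inner b c k hbc hk3 hcase; rw [Bt_comm] at this; tauto
    · have := outer b a k hk2 (Or.inl hab) hcase; rw [Bt_comm] at this; tauto

lemma GP4_core {s : ℕ} (k a b c : Fin s) : GP4 k a b c := by
  rcases le_total (a : ℕ) (b : ℕ) with h1 | h1 <;>
  rcases le_total (b : ℕ) (c : ℕ) with h2 | h2 <;>
  rcases le_total (a : ℕ) (c : ℕ) with h3 | h3
  · exact GP4_sorted k a b c h1 h2
  · exact GP4_sorted k a b c h1 h2
  · exact GP4_swap23 (GP4_sorted k a c b h3 h2)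
  · exact GP4_swap23 (GP4_swap12 (GP4_sorted k c a b h3 h1))
  · exact GP4_swap12 (GP4_sorted k b a c h1 h3)
  · exact GP4_swap12 (GP4_swap23 (GP4_sorted k b c a h2 h3))
  · exact GP4_swap23 (GP4_sorted k a c b h3 h2)
  · exact GP4_swap12 (GP4_swap23 (GP4_swap12 (GP4_sorted k c b a h2 h1)))

theorem stmt_8 (r s : ℕ) (hr : 2 ≤ r) (hs : 3 ≤ s) (S : Finset (Fin r × Fin s))
    (hgp : isGPSetD (cylDist (r := r) (s := s)) ↑S) (hcard : 4 ≤ S.card) :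
    ∀ i : Fin r, (S.filter (fun v => v.1 = i)).card ≤ 2 := by
  intro i
  by_contra hcon
  push_neg at hcon
  obtain ⟨t, hts, ht3⟩ := Finset.exists_subset_card_eq hcon
  obtain ⟨u1, u2, u3, h12, h13, h23, rfl⟩ := Finset.card_eq_three.mp ht3
  have hm1 := Finset.mem_filter.mp (hts (by simp : u1 ∈ ({u1, u2, u3} : Finset _)))
  have hm2 := Finset.mem_filter.mp (hts (by simp : u2 ∈ ({u1, u2, u3} : Finset _)))
  have hm3 := Finset.mem_filter.mp (hts (by simp : u3 ∈ ({u1, u2, u3} : Finset _)))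
  obtain ⟨h1S, e1⟩ := hm1
  obtain ⟨h2S, e2⟩ := hm2
  obtain ⟨h3S, e3⟩ := hm3
  have hnsub : ¬ S ⊆ {u1, u2, u3} := by
    intro hsub
    have := Finset.card_le_card hsub
    rw [ht3] at this
    omega
  obtain ⟨w, hwS, hw⟩ := Finset.not_subset.mp hnsub
  simp only [Finset.mem_insert, Finset.mem_singleton, not_or] at hw
  obtain ⟨hw1, hw2, hw3⟩ := hw
  have hkey := GP4_core w.2 u1.2 u2.2 u3.2
  have m1 : u1 ∈ (↑S : Set _) := h1S
  have m2 : u2 ∈ (↑S : Set _) := h2S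
  have m3 : u3 ∈ (↑S : Set _) := h3S
  have mw : w ∈ (↑S : Set _) := hwS
  unfold GP4 Bt at hkey
  rcases hkey with h|h|h|h|h|h|h|h|h
  · exact hgp u1 m1 u3 m3 u2 m2 h13 (Ne.symm h23) h12
      (by simp only [cylDist, e1, e2, e3]; omega)
  · exact hgp u1 m1 u2 m2 u3 m3 h12 h23 h13
      (by simp only [cylDist, e1, e2, e3]; omega)
  · exact hgp u2 m2 u3 m3 u1 m1 h23 (Ne.symm h13) (Ne.symm h12)
      (by simp only [cylDist, e1, e2, e3]; omega)
  · exact hgp w mw u2 m2 u1 m1 hw2 (Ne.symm h12) hw1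
      (by simp only [cylDist, e1, e2]; omega)
  · exact hgp w mw u3 m3 u1 m1 hw3 (Ne.symm h13) hw1
      (by simp only [cylDist, e1, e3]; omega)
  · exact hgp w mw u1 m1 u2 m2 hw1 h12 hw2
      (by simp only [cylDist, e1, e2]; omega)
  · exact hgp w mw u3 m3 u2 m2 hw3 (Ne.symm h23) hw2
      (by simp only [cylDist, e2, e3]; omega)
  · exact hgp w mw u1 m1 u3 m3 hw1 h13 hw3
      (by simp only [cylDist, e1, e3]; omega)
  · exact hgp w mw u2 m2 u3 m3 hw2 h23 hw3
      (by simp only [cylDist, e2, e3]; omega)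
end

section
/- Let r ≥ 2, s ≥ 3, and S a general position set of P_r □ C_s. If some C_s-layer contains exactly 2 vertices of S, then |S| ≤ 4. -/
set_option maxHeartbeats 2000000

def cdn (s u v : ℕ) : ℕ := min (u - v + (v - u)) (s - (u - v + (v - u)))
def posn (s av xv : ℕ) : ℕ := if av ≤ xv then xv - av else xv + s - av

lemma posn_lt {s av xv : ℕ} (ha : av < s) (hx : xv < s) : posn s av xv < s := by
  unfold posn; split <;> omega

lemma posn_self (s av : ℕ) : posn s av av = 0 := by unfold posn; simp

lemma cyc_cdn {s : ℕ} (a x y : Fin s) :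
    cycDist x y = cdn s (posn s a.val x.val) (posn s a.val y.val) := by
  have := a.isLt; have := x.isLt; have := y.isLt
  unfold cycDist cdn posn
  split <;> split <;> omega

lemma cycDist_tri {s : ℕ} (x y z : Fin s) :
    cycDist x z ≤ cycDist x y + cycDist y z := by
  have := x.isLt; have := y.isLt; have := z.isLt
  unfold cycDist; omega

lemma cyl_iff {r s : ℕ} (p m q : Fin r × Fin s)
    (hrow : ((p.1 : ℤ) - q.1).natAbs = ((p.1 : ℤ) - m.1).natAbs + ((m.1 : ℤ) - q.1).natAbs) :
    cylDist p q = cylDist p m + cylDist m q ↔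
      cycDist p.2 q.2 = cycDist p.2 m.2 + cycDist m.2 q.2 := by
  have tri := cycDist_tri p.2 m.2 q.2
  unfold cylDist
  omega

lemma ival_of {s β γ : ℕ} (hβ : β < s) (hγ : γ < s)
    (h1 : cdn s 0 γ ≠ cdn s 0 β + cdn s β γ)
    (h2 : cdn s β γ ≠ cdn s β 0 + cdn s 0 γ) :
    (0 < γ ∧ γ < β ∧ 2*γ < s ∧ 2*(β-γ) < s) ∨ (β < γ ∧ 2*(s-γ) < s ∧ 2*(γ-β) < s) := by
  unfold cdn at h1 h2; omega

lemma P_of_D {s β γ γ' : ℕ} (hβ : β < s) (hγ : γ < s) (hγ' : γ' < s)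
    (hI : (0 < γ ∧ γ < β ∧ 2*γ < s ∧ 2*(β-γ) < s) ∨ (β < γ ∧ 2*(s-γ) < s ∧ 2*(γ-β) < s))
    (hI' : (0 < γ' ∧ γ' < β ∧ 2*γ' < s ∧ 2*(β-γ') < s) ∨ (β < γ' ∧ 2*(s-γ') < s ∧ 2*(γ'-β) < s))
    (hD : (γ < β ∧ β < γ') ∨ (γ' < β ∧ β < γ)) :
    cdn s γ γ' = cdn s γ 0 + cdn s 0 γ' ∨ cdn s γ γ' = cdn s γ β + cdn s β γ' := by
  unfold cdn
  rcases hI with h | h <;> rcases hI' with h' | h' <;> rcases hD with hD | hD <;> omega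

lemma Q_of_nD {s β γ γ' : ℕ} (hβ : β < s) (hγ : γ < s) (hγ' : γ' < s)
    (hI : (0 < γ ∧ γ < β ∧ 2*γ < s ∧ 2*(β-γ) < s) ∨ (β < γ ∧ 2*(s-γ) < s ∧ 2*(γ-β) < s))
    (hI' : (0 < γ' ∧ γ' < β ∧ 2*γ' < s ∧ 2*(β-γ') < s) ∨ (β < γ' ∧ 2*(s-γ') < s ∧ 2*(γ'-β) < s))
    (hnD : ¬ ((γ < β ∧ β < γ') ∨ (γ' < β ∧ β < γ))) :
    cdn s 0 γ' = cdn s 0 γ + cdn s γ γ' ∨ cdn s β γ' = cdn s β γ + cdn s γ γ' := by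
  unfold cdn
  rcases hI with h | h <;> rcases hI' with h' | h' <;> omega

section Graph

variable {r s : ℕ} {S : Finset (Fin r × Fin s)}
  (hgp : isGPSetD (cylDist (r := r) (s := s)) ↑S)
  {i : Fin r} {u v : Fin r × Fin s}
  (huS : u ∈ S) (hvS : v ∈ S) (hu1 : u.1 = i) (hv1 : v.1 = i) (huv : u ≠ v)

include hgp huS hvS hu1 hv1 huv

/-- Every off-layer vertex of `S` has cyclic position (relative to `u.2`)
strictly inside one of the two valid windows. -/
lemma valid_of {w : Fin r × Fin s} (hwS : w ∈ S) (hwi : ¬ w.1 = i) :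
    (0 < posn s u.2.val w.2.val ∧ posn s u.2.val w.2.val < posn s u.2.val v.2.val ∧
      2*(posn s u.2.val w.2.val) < s ∧
      2*(posn s u.2.val v.2.val - posn s u.2.val w.2.val) < s) ∨
    (posn s u.2.val v.2.val < posn s u.2.val w.2.val ∧
      2*(s - posn s u.2.val w.2.val) < s ∧
      2*(posn s u.2.val w.2.val - posn s u.2.val v.2.val) < s) := by
  have hβ : posn s u.2.val v.2.val < s := posn_lt u.2.isLt v.2.isLt
  have e0 : posn s u.2.val u.2.val = 0 := posn_self s u.2.val
  have husS : u ∈ (↑S : Set (Fin r × Fin s)) := Finset.mem_coe.mpr huS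
  have hvsS : v ∈ (↑S : Set (Fin r × Fin s)) := Finset.mem_coe.mpr hvS
  have hwsS : w ∈ (↑S : Set (Fin r × Fin s)) := Finset.mem_coe.mpr hwS
  have hneuw : u ≠ w := fun e => hwi (by rw [← e, hu1])
  have hnevw : v ≠ w := fun e => hwi (by rw [← e, hv1])
  have g1 := hgp u husS w hwsS v hvsS hneuw (Ne.symm hnevw) huv
  have g2 := hgp v hvsS w hwsS u husS hnevw (Ne.symm hneuw) (Ne.symm huv)
  have r1 : ((u.1 : ℤ) - w.1).natAbs
      = ((u.1 : ℤ) - v.1).natAbs + ((v.1 : ℤ) - w.1).natAbs := by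
    rw [hu1, hv1]; omega
  have r2 : ((v.1 : ℤ) - w.1).natAbs
      = ((v.1 : ℤ) - u.1).natAbs + ((u.1 : ℤ) - w.1).natAbs := by
    rw [hu1, hv1]; omega
  have c1 : cycDist u.2 w.2 ≠ cycDist u.2 v.2 + cycDist v.2 w.2 :=
    fun e => g1 ((cyl_iff u v w r1).mpr e)
  have c2 : cycDist v.2 w.2 ≠ cycDist v.2 u.2 + cycDist u.2 w.2 :=
    fun e => g2 ((cyl_iff v u w r2).mpr e)
  rw [cyc_cdn u.2 u.2 w.2, cyc_cdn u.2 u.2 v.2, cyc_cdn u.2 v.2 w.2, e0] at c1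
  rw [cyc_cdn u.2 v.2 w.2, cyc_cdn u.2 v.2 u.2, cyc_cdn u.2 u.2 w.2, e0] at c2
  exact ival_of hβ (posn_lt u.2.isLt w.2.isLt) c1 c2

/-- Two off-layer vertices on the same side of layer `i` (with `w` the closer one)
have positions separated by `v`'s position. -/
lemma same_of {w w' : Fin r × Fin s} (hwS : w ∈ S) (hw'S : w' ∈ S) (hne : w ≠ w')
    (hwi : ¬ w.1 = i) (hw'i : ¬ w'.1 = i)
    (hside : (i.val < w.1.val ∧ w.1.val ≤ w'.1.val) ∨
      (w'.1.val ≤ w.1.val ∧ w.1.val < i.val)) :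
    ((posn s u.2.val w.2.val < posn s u.2.val v.2.val ∧
      posn s u.2.val v.2.val < posn s u.2.val w'.2.val) ∨
     (posn s u.2.val w'.2.val < posn s u.2.val v.2.val ∧
      posn s u.2.val v.2.val < posn s u.2.val w.2.val)) := by
  have hβ : posn s u.2.val v.2.val < s := posn_lt u.2.isLt v.2.isLt
  have e0 : posn s u.2.val u.2.val = 0 := posn_self s u.2.val
  have husS : u ∈ (↑S : Set (Fin r × Fin s)) := Finset.mem_coe.mpr huS
  have hvsS : v ∈ (↑S : Set (Fin r × Fin s)) := Finset.mem_coe.mpr hvS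
  have hwsS : w ∈ (↑S : Set (Fin r × Fin s)) := Finset.mem_coe.mpr hwS
  have hw'sS : w' ∈ (↑S : Set (Fin r × Fin s)) := Finset.mem_coe.mpr hw'S
  have hneuw : u ≠ w := fun e => hwi (by rw [← e, hu1])
  have hneuw' : u ≠ w' := fun e => hw'i (by rw [← e, hu1])
  have hnevw : v ≠ w := fun e => hwi (by rw [← e, hv1])
  have hnevw' : v ≠ w' := fun e => hw'i (by rw [← e, hv1])
  have g1 := hgp u husS w' hw'sS w hwsS hneuw' (Ne.symm hne) hneuw
  have g2 := hgp v hvsS w' hw'sS w hwsS hnevw' (Ne.symm hne) hnevw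
  have r1 : ((u.1 : ℤ) - w'.1).natAbs
      = ((u.1 : ℤ) - w.1).natAbs + ((w.1 : ℤ) - w'.1).natAbs := by
    rw [hu1]; omega
  have r2 : ((v.1 : ℤ) - w'.1).natAbs
      = ((v.1 : ℤ) - w.1).natAbs + ((w.1 : ℤ) - w'.1).natAbs := by
    rw [hv1]; omega
  have c1 : cycDist u.2 w'.2 ≠ cycDist u.2 w.2 + cycDist w.2 w'.2 :=
    fun e => g1 ((cyl_iff u w w' r1).mpr e)
  have c2 : cycDist v.2 w'.2 ≠ cycDist v.2 w.2 + cycDist w.2 w'.2 :=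
    fun e => g2 ((cyl_iff v w w' r2).mpr e)
  rw [cyc_cdn u.2 u.2 w'.2, cyc_cdn u.2 u.2 w.2, cyc_cdn u.2 w.2 w'.2, e0] at c1
  rw [cyc_cdn u.2 v.2 w'.2, cyc_cdn u.2 v.2 w.2, cyc_cdn u.2 w.2 w'.2] at c2
  by_contra hnD
  rcases Q_of_nD hβ (posn_lt u.2.isLt w.2.isLt) (posn_lt u.2.isLt w'.2.isLt)
    (valid_of hgp huS hvS hu1 hv1 huv hwS hwi)
    (valid_of hgp huS hvS hu1 hv1 huv hw'S hw'i) hnD with q | q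
  · exact c1 q
  · exact c2 q

/-- Two off-layer vertices on opposite sides of layer `i`
have positions NOT separated by `v`'s position. -/
lemma cross_of {w w' : Fin r × Fin s} (hwS : w ∈ S) (hw'S : w' ∈ S) (hne : w ≠ w')
    (hwi : ¬ w.1 = i) (hw'i : ¬ w'.1 = i)
    (hside : w.1.val < i.val ∧ i.val < w'.1.val) :
    ¬ ((posn s u.2.val w.2.val < posn s u.2.val v.2.val ∧
      posn s u.2.val v.2.val < posn s u.2.val w'.2.val) ∨
     (posn s u.2.val w'.2.val < posn s u.2.val v.2.val ∧
      posn s u.2.val v.2.val < posn s u.2.val w.2.val)) := by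
  have hβ : posn s u.2.val v.2.val < s := posn_lt u.2.isLt v.2.isLt
  have e0 : posn s u.2.val u.2.val = 0 := posn_self s u.2.val
  have husS : u ∈ (↑S : Set (Fin r × Fin s)) := Finset.mem_coe.mpr huS
  have hvsS : v ∈ (↑S : Set (Fin r × Fin s)) := Finset.mem_coe.mpr hvS
  have hwsS : w ∈ (↑S : Set (Fin r × Fin s)) := Finset.mem_coe.mpr hwS
  have hw'sS : w' ∈ (↑S : Set (Fin r × Fin s)) := Finset.mem_coe.mpr hw'S
  have hneuw : u ≠ w := fun e => hwi (by rw [← e, hu1])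
  have hneuw' : u ≠ w' := fun e => hw'i (by rw [← e, hu1])
  have hnevw : v ≠ w := fun e => hwi (by rw [← e, hv1])
  have hnevw' : v ≠ w' := fun e => hw'i (by rw [← e, hv1])
  have g1 := hgp w hwsS w' hw'sS u husS hne (Ne.symm hneuw') (Ne.symm hneuw)
  have g2 := hgp w hwsS w' hw'sS v hvsS hne (Ne.symm hnevw') (Ne.symm hnevw)
  have r1 : ((w.1 : ℤ) - w'.1).natAbs
      = ((w.1 : ℤ) - u.1).natAbs + ((u.1 : ℤ) - w'.1).natAbs := by
    rw [hu1]; omega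
  have r2 : ((w.1 : ℤ) - w'.1).natAbs
      = ((w.1 : ℤ) - v.1).natAbs + ((v.1 : ℤ) - w'.1).natAbs := by
    rw [hv1]; omega
  have c1 : cycDist w.2 w'.2 ≠ cycDist w.2 u.2 + cycDist u.2 w'.2 :=
    fun e => g1 ((cyl_iff w u w' r1).mpr e)
  have c2 : cycDist w.2 w'.2 ≠ cycDist w.2 v.2 + cycDist v.2 w'.2 :=
    fun e => g2 ((cyl_iff w v w' r2).mpr e)
  rw [cyc_cdn u.2 w.2 w'.2, cyc_cdn u.2 w.2 u.2, cyc_cdn u.2 u.2 w'.2, e0] at c1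
  rw [cyc_cdn u.2 w.2 w'.2, cyc_cdn u.2 w.2 v.2, cyc_cdn u.2 v.2 w'.2] at c2
  intro hD
  rcases P_of_D hβ (posn_lt u.2.isLt w.2.isLt) (posn_lt u.2.isLt w'.2.isLt)
    (valid_of hgp huS hvS hu1 hv1 huv hwS hwi)
    (valid_of hgp huS hvS hu1 hv1 huv hw'S hw'i) hD with q | q
  · exact c1 q
  · exact c2 q

/-- Separation holds iff the two off-layer vertices are on the same side. -/
lemma pairfact_of {w w' : Fin r × Fin s} (hwS : w ∈ S) (hw'S : w' ∈ S) (hne : w ≠ w')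
    (hwi : ¬ w.1 = i) (hw'i : ¬ w'.1 = i) :
    (((w.1.val < i.val ↔ w'.1.val < i.val)) →
      ((posn s u.2.val w.2.val < posn s u.2.val v.2.val ∧
        posn s u.2.val v.2.val < posn s u.2.val w'.2.val) ∨
       (posn s u.2.val w'.2.val < posn s u.2.val v.2.val ∧
        posn s u.2.val v.2.val < posn s u.2.val w.2.val))) ∧
    ((¬ (w.1.val < i.val ↔ w'.1.val < i.val)) →
      ¬ ((posn s u.2.val w.2.val < posn s u.2.val v.2.val ∧
        posn s u.2.val v.2.val < posn s u.2.val w'.2.val) ∨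
       (posn s u.2.val w'.2.val < posn s u.2.val v.2.val ∧
        posn s u.2.val v.2.val < posn s u.2.val w.2.val))) := by
  have hnei : w.1.val ≠ i.val := fun e => hwi (Fin.val_injective e)
  have hnei' : w'.1.val ≠ i.val := fun e => hw'i (Fin.val_injective e)
  constructor
  · intro hss
    rcases Nat.lt_or_ge w.1.val i.val with hs | hs
    · have hs' : w'.1.val < i.val := hss.mp hs
      rcases Nat.le_total w.1.val w'.1.val with hle | hle
      · exact Or.symm (same_of hgp huS hvS hu1 hv1 huv hw'S hwS (Ne.symm hne) hw'i hwi
          (Or.inr ⟨hle, hs'⟩))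
      · exact same_of hgp huS hvS hu1 hv1 huv hwS hw'S hne hwi hw'i (Or.inr ⟨hle, hs⟩)
    · have hgt : i.val < w.1.val := lt_of_le_of_ne hs (Ne.symm hnei)
      have hgt' : i.val < w'.1.val := by
        rcases Nat.lt_or_ge w'.1.val i.val with h | h
        · exact absurd (hss.mpr h) (by omega)
        · exact lt_of_le_of_ne h (Ne.symm hnei')
      rcases Nat.le_total w.1.val w'.1.val with hle | hle
      · exact same_of hgp huS hvS hu1 hv1 huv hwS hw'S hne hwi hw'i (Or.inl ⟨hgt, hle⟩)
      · exact Or.symm (same_of hgp huS hvS hu1 hv1 huv hw'S hwS (Ne.symm hne) hw'i hwi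
          (Or.inl ⟨hgt', hle⟩))
  · intro hss
    rcases Nat.lt_or_ge w.1.val i.val with hs | hs
    · have hgt' : i.val < w'.1.val := by
        rcases Nat.lt_or_ge w'.1.val i.val with h | h
        · exact absurd (iff_of_true hs h) hss
        · exact lt_of_le_of_ne h (Ne.symm hnei')
      exact cross_of hgp huS hvS hu1 hv1 huv hwS hw'S hne hwi hw'i ⟨hs, hgt'⟩
    · have hgt : i.val < w.1.val := lt_of_le_of_ne hs (Ne.symm hnei)
      have hs' : w'.1.val < i.val := by
        rcases Nat.lt_or_ge w'.1.val i.val with h | h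
        · exact h
        · exact absurd (iff_of_false (by omega) (by omega)) hss
      exact fun hD =>
        cross_of hgp huS hvS hu1 hv1 huv hw'S hwS (Ne.symm hne) hw'i hwi ⟨hs', hgt⟩
          (Or.symm hD)

end Graph

theorem stmt_9 (r s : ℕ) (hr : 2 ≤ r) (hs : 3 ≤ s) (S : Finset (Fin r × Fin s))
    (hgp : isGPSetD (cylDist (r := r) (s := s)) ↑S)
    (hlayer : ∃ i : Fin r, (S.filter (fun v => v.1 = i)).card = 2) :
    S.card ≤ 4 := by
  by_contra hcard
  obtain ⟨i, hi⟩ := hlayer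
  obtain ⟨u, v, huv, hset⟩ := Finset.card_eq_two.mp hi
  have hu' : u ∈ S.filter (fun v => v.1 = i) := by rw [hset]; simp
  have hv' : v ∈ S.filter (fun v => v.1 = i) := by rw [hset]; simp
  obtain ⟨huS, hu1⟩ := Finset.mem_filter.mp hu'
  obtain ⟨hvS, hv1⟩ := Finset.mem_filter.mp hv'
  have hsplit := Finset.card_filter_add_card_filter_not
    (s := S) (p := fun v => v.1 = i)
  have hoff : 3 ≤ (S.filter (fun v => ¬ v.1 = i)).card := by omega
  obtain ⟨T, hTsub, hT3⟩ := Finset.exists_subset_card_eq hoff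
  obtain ⟨w1, w2, w3, h12, h13, h23, hTeq⟩ := Finset.card_eq_three.mp hT3
  have hmem : ∀ w ∈ T, w ∈ S ∧ ¬ w.1 = i := fun w hw => Finset.mem_filter.mp (hTsub hw)
  obtain ⟨m1, o1⟩ := hmem w1 (by rw [hTeq]; simp)
  obtain ⟨m2, o2⟩ := hmem w2 (by rw [hTeq]; simp)
  obtain ⟨m3, o3⟩ := hmem w3 (by rw [hTeq]; simp)
  have hI1 := valid_of hgp huS hvS hu1 hv1 huv m1 o1
  have hI2 := valid_of hgp huS hvS hu1 hv1 huv m2 o2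
  have hI3 := valid_of hgp huS hvS hu1 hv1 huv m3 o3
  have f12 := pairfact_of hgp huS hvS hu1 hv1 huv m1 m2 h12 o1 o2
  have f13 := pairfact_of hgp huS hvS hu1 hv1 huv m1 m3 h13 o1 o3
  have f23 := pairfact_of hgp huS hvS hu1 hv1 huv m2 m3 h23 o2 o3
  clear hgp hset hu' hv' hsplit hTsub hT3 hTeq hmem hcard hi
  by_cases s1 : w1.1.val < i.val
  · by_cases s2 : w2.1.val < i.val
    · by_cases s3 : w3.1.val < i.val
      · have d12 := f12.1 (iff_of_true s1 s2)
        have d13 := f13.1 (iff_of_true s1 s3)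
        have d23 := f23.1 (iff_of_true s2 s3)
        clear f12 f13 f23; omega
      · have d12 := f12.1 (iff_of_true s1 s2)
        have d13 := f13.2 (fun h => s3 (h.mp s1))
        have d23 := f23.2 (fun h => s3 (h.mp s2))
        clear f12 f13 f23; omega
    · by_cases s3 : w3.1.val < i.val
      · have d12 := f12.2 (fun h => s2 (h.mp s1))
        have d13 := f13.1 (iff_of_true s1 s3)
        have d23 := f23.2 (fun h => s2 (h.mpr s3))
        clear f12 f13 f23; omega
      · have d12 := f12.2 (fun h => s2 (h.mp s1))
        have d13 := f13.2 (fun h => s3 (h.mp s1))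
        have d23 := f23.1 (iff_of_false s2 s3)
        clear f12 f13 f23; omega
  · by_cases s2 : w2.1.val < i.val
    · by_cases s3 : w3.1.val < i.val
      · have d12 := f12.2 (fun h => s1 (h.mpr s2))
        have d13 := f13.2 (fun h => s1 (h.mpr s3))
        have d23 := f23.1 (iff_of_true s2 s3)
        clear f12 f13 f23; omega
      · have d12 := f12.2 (fun h => s1 (h.mpr s2))
        have d13 := f13.1 (iff_of_false s1 s3)
        have d23 := f23.2 (fun h => s3 (h.mp s2))
        clear f12 f13 f23; omega
    · by_cases s3 : w3.1.val < i.val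
      · have d12 := f12.1 (iff_of_false s1 s2)
        have d13 := f13.2 (fun h => s1 (h.mpr s3))
        have d23 := f23.2 (fun h => s2 (h.mpr s3))
        clear f12 f13 f23; omega
      · have d12 := f12.1 (iff_of_false s1 s2)
        have d13 := f13.1 (iff_of_false s1 s3)
        have d23 := f23.1 (iff_of_false s2 s3)
        clear f12 f13 f23; omega
end

section
/- Let r ≥ 6 and s ≥ 3, and suppose S is a general position set of P_r □ C_s of size 5 whose projection to P_r is injective (each C_s-layer contains at most one vertex of S). Then gp(P_5 □ C_s) ≥ 5. -/
lemma cycDist_tri_s10 {s : ℕ} (a b c : Fin s) :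
    cycDist a c ≤ cycDist a b + cycDist b c := by
  have ha := a.isLt; have hb := b.isLt; have hc := c.isLt
  simp only [cycDist]
  omega

theorem stmt_10 (r s : ℕ) (hr : 6 ≤ r) (hs : 3 ≤ s) (S : Finset (Fin r × Fin s))
    (hgp : isGPSetD (cylDist (r := r) (s := s)) ↑S) (hcard : S.card = 5)
    (hinj : ∀ u ∈ S, ∀ v ∈ S, u.1 = v.1 → u = v) :
    ∃ T : Finset (Fin 5 × Fin s),
      isGPSetD (cylDist (r := 5) (s := s)) ↑T ∧ 5 ≤ T.card := by
  classical
  -- rank function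
  let g : Fin r × Fin s → ℕ := fun u => (S.filter (fun v => v.1 < u.1)).card
  have hle : ∀ u ∈ S, g u ≤ 4 := by
    intro u hu
    show (S.filter (fun v => v.1 < u.1)).card ≤ 4
    have hsub : S.filter (fun v => v.1 < u.1) ⊆ S.erase u := by
      intro v hv
      simp only [Finset.mem_filter] at hv
      refine Finset.mem_erase.2 ⟨?_, hv.1⟩
      rintro rfl
      exact absurd hv.2 (lt_irrefl _)
    have := Finset.card_le_card hsub
    rw [Finset.card_erase_of_mem hu, hcard] at this
    omega
  have hmono : ∀ u ∈ S, ∀ v ∈ S, u.1 < v.1 → g u < g v := by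
    intro u hu v hv huv
    show (S.filter (fun v' => v'.1 < u.1)).card < (S.filter (fun v' => v'.1 < v.1)).card
    apply Finset.card_lt_card
    constructor
    · intro x hx
      simp only [Finset.mem_filter] at hx ⊢
      exact ⟨hx.1, lt_trans hx.2 huv⟩
    · intro hsub
      have hu' : u ∈ S.filter (fun v' => v'.1 < v.1) := Finset.mem_filter.2 ⟨hu, huv⟩
      have := hsub hu'
      simp only [Finset.mem_filter] at this
      exact absurd this.2 (lt_irrefl _)
  let f : Fin r × Fin s → Fin 5 × Fin s := fun u => (⟨min (g u) 4, by omega⟩, u.2)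
  have hval : ∀ u ∈ S, ((f u).1 : ℕ) = g u := by
    intro u hu
    simp only [f]
    exact Nat.min_eq_left (hle u hu)
  have hneq1 : ∀ u ∈ S, ∀ v ∈ S, u ≠ v → u.1 ≠ v.1 :=
    fun u hu v hv h h1 => h (hinj u hu v hv h1)
  have hinjf : Set.InjOn f ↑S := by
    intro u hu v hv h
    by_contra hne
    have h1 : u.1 ≠ v.1 := hneq1 u hu v hv hne
    have h2 : ((f u).1 : ℕ) = ((f v).1 : ℕ) := by rw [h]
    rw [hval u hu, hval v hv] at h2
    rcases lt_or_gt_of_ne h1 with hlt | hlt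
    · exact absurd h2 (Nat.ne_of_lt (hmono u hu v hv hlt))
    · exact absurd h2.symm (Nat.ne_of_lt (hmono v hv u hu hlt))
  refine ⟨S.image f, ?_, by
    rw [Finset.card_image_of_injOn hinjf, hcard]⟩
  intro u' hu' v' hv' w' hw' huv hvw huw heq
  simp only [Finset.coe_image, Set.mem_image, Finset.mem_coe] at hu' hv' hw'
  obtain ⟨u, hu, rfl⟩ := hu'
  obtain ⟨v, hv, rfl⟩ := hv'
  obtain ⟨w, hw, rfl⟩ := hw'
  have huv' : u ≠ v := fun h => huv (by rw [h])
  have hvw' : v ≠ w := fun h => hvw (by rw [h])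
  have huw' : u ≠ w := fun h => huw (by rw [h])
  have horig := hgp u hu v hv w hw huv' hvw' huw'
  -- row values
  have ruv : u.1 ≠ v.1 := hneq1 u hu v hv huv'
  have rvw : v.1 ≠ w.1 := hneq1 v hv w hw hvw'
  have ruw : u.1 ≠ w.1 := hneq1 u hu w hw huw'
  have ctri : cycDist u.2 v.2 ≤ cycDist u.2 w.2 + cycDist w.2 v.2 := cycDist_tri_s10 _ _ _
  -- unfold distances
  simp only [cylDist] at heq horig
  rw [show ((f u).2) = u.2 from rfl, show ((f v).2) = v.2 from rfl,
    show ((f w).2) = w.2 from rfl] at heq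
  have e1 : (((f u).1 : ℕ) : ℤ) = (g u : ℤ) := by rw [hval u hu]
  have e2 : (((f v).1 : ℕ) : ℤ) = (g v : ℤ) := by rw [hval v hv]
  have e3 : (((f w).1 : ℕ) : ℤ) = (g w : ℤ) := by rw [hval w hw]
  rw [e1, e2, e3] at heq
  -- mono facts as vals
  have m1 : u.1.val < v.1.val → g u < g v := fun h => hmono u hu v hv h
  have m2 : v.1.val < u.1.val → g v < g u := fun h => hmono v hv u hu h
  have m3 : u.1.val < w.1.val → g u < g w := fun h => hmono u hu w hw h
  have m4 : w.1.val < u.1.val → g w < g u := fun h => hmono w hw u hu h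
  have m5 : v.1.val < w.1.val → g v < g w := fun h => hmono v hv w hw h
  have m6 : w.1.val < v.1.val → g w < g v := fun h => hmono w hw v hv h
  have duv : u.1.val ≠ v.1.val := fun h => ruv (Fin.val_injective h)
  have dvw : v.1.val ≠ w.1.val := fun h => rvw (Fin.val_injective h)
  have duw : u.1.val ≠ w.1.val := fun h => ruw (Fin.val_injective h)
  rcases Nat.lt_trichotomy u.1.val w.1.val with h1 | h1 | h1
  · rcases Nat.lt_trichotomy v.1.val w.1.val with h2 | h2 | h2
    · -- w above both u, v
      have := m3 h1; have := m5 h2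
      omega
    · exact absurd h2 dvw
    · -- u < w < v or v < u < w ... w between or v < w? h1: u < w, h2: w < v so u < w < v: middle
      have := m3 h1; have := m6 h2
      omega
  · exact absurd h1 duw
  · rcases Nat.lt_trichotomy v.1.val w.1.val with h2 | h2 | h2
    · -- v < w < u : middle
      have := m4 h1; have := m5 h2
      omega
    · exact absurd h2 dvw
    · -- w below both
      have := m4 h1; have := m6 h2
      omega
end

section
/- For s ≥ 9, the set {(0,1), (1,4), (2, ⌊s/2⌋+2), (3,0), (4,3)} is a general position set of P_5 □ C_s; hence gp(P_5 □ C_s) ≥ 5. -/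
set_option maxHeartbeats 4000000

/-- The general position number with respect to a distance function `d`. -/
noncomputable def gpNumD {α : Type*} (d : α → α → ℕ) : ℕ :=
  sSup {n | ∃ S : Finset α, isGPSetD d ↑S ∧ S.card = n}

theorem stmt_15 (s : ℕ) (hs : 9 ≤ s) :
    isGPSetD (cylDist (r := 5) (s := s))
        {((0 : Fin 5), (⟨1, by omega⟩ : Fin s)), (1, ⟨4, by omega⟩),
         (2, ⟨s / 2 + 2, by omega⟩), (3, ⟨0, by omega⟩), (4, ⟨3, by omega⟩)} ∧
      5 ≤ gpNumD (cylDist (r := 5) (s := s)) := by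
  have hgp : isGPSetD (cylDist (r := 5) (s := s))
        {((0 : Fin 5), (⟨1, by omega⟩ : Fin s)), (1, ⟨4, by omega⟩),
         (2, ⟨s / 2 + 2, by omega⟩), (3, ⟨0, by omega⟩), (4, ⟨3, by omega⟩)} := by
    intro u hu v hv w hw huv hvw huw
    simp only [Set.mem_insert_iff, Set.mem_singleton_iff] at hu hv hw
    rcases hu with rfl|rfl|rfl|rfl|rfl <;> rcases hv with rfl|rfl|rfl|rfl|rfl <;>
      rcases hw with rfl|rfl|rfl|rfl|rfl <;>
      first
        | exact absurd rfl huv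
        | exact absurd rfl hvw
        | exact absurd rfl huw
        | (simp only [cylDist, cycDist, Fin.val_mk]; norm_num; omega)
  refine ⟨hgp, ?_⟩
  have hbdd : BddAbove {n | ∃ S : Finset (Fin 5 × Fin s),
      isGPSetD (cylDist (r := 5) (s := s)) ↑S ∧ S.card = n} := by
    refine ⟨Fintype.card (Fin 5 × Fin s), ?_⟩
    rintro n ⟨S, -, rfl⟩
    exact S.card_le_univ.trans_eq (by simp)
  refine le_csSup hbdd ?_
  refine ⟨{((0 : Fin 5), (⟨1, by omega⟩ : Fin s)), (1, ⟨4, by omega⟩),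
         (2, ⟨s / 2 + 2, by omega⟩), (3, ⟨0, by omega⟩), (4, ⟨3, by omega⟩)}, ?_, ?_⟩
  · convert hgp using 1
    simp
  · rw [Finset.card_insert_of_notMem (by simp [Prod.ext_iff, Fin.ext_iff]; try omega),
        Finset.card_insert_of_notMem (by simp [Prod.ext_iff, Fin.ext_iff]; try omega),
        Finset.card_insert_of_notMem (by simp [Prod.ext_iff, Fin.ext_iff]; try omega),
        Finset.card_insert_of_notMem (by simp [Prod.ext_iff, Fin.ext_iff]; try omega),
        Finset.card_singleton]
end

section
/- If S is a general position set in the grid P_r □ P_s and S contains a corner vertex (a vertex of degree 2), then |S| ≤ 3. -/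
set_option maxHeartbeats 1000000 in
private lemma grid_pair {r s : ℕ} (S : Finset (Fin r × Fin s))
    (hgp : isGPSetD (gridDist (r := r) (s := s)) ↑S)
    (x : Fin r × Fin s) (hx : x ∈ S)
    (hc1 : (x.1 : ℕ) = 0 ∨ (x.1 : ℕ) = r - 1)
    (hc2 : (x.2 : ℕ) = 0 ∨ (x.2 : ℕ) = s - 1)
    (p q : Fin r × Fin s) (hp : p ∈ S) (hq : q ∈ S)
    (hpx : p ≠ x) (hqx : q ≠ x) (hpq : p ≠ q)
    (h1 : ((p.1 : ℤ) - x.1).natAbs ≤ ((q.1 : ℤ) - x.1).natAbs) :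
    ((p.1 : ℤ) - x.1).natAbs < ((q.1 : ℤ) - x.1).natAbs ∧
      ((q.2 : ℤ) - x.2).natAbs < ((p.2 : ℤ) - x.2).natAbs := by
  have hr1 : (p.1 : ℕ) < r := p.1.isLt
  have hr2 : (q.1 : ℕ) < r := q.1.isLt
  have hr4 : (x.1 : ℕ) < r := x.1.isLt
  have hs1 : (p.2 : ℕ) < s := p.2.isLt
  have hs2 : (q.2 : ℕ) < s := q.2.isLt
  have hs4 : (x.2 : ℕ) < s := x.2.isLt
  have hxS : x ∈ (S : Set _) := hx
  have hpS : p ∈ (S : Set _) := hp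
  have hqS : q ∈ (S : Set _) := hq
  have i1 := hgp x hxS q hqS p hpS hqx.symm hpq.symm (Ne.symm hpx)
  have i2 := hgp x hxS p hpS q hqS hpx.symm hpq hqx.symm
  simp only [ne_eq, Prod.ext_iff, Fin.ext_iff, not_and] at hpq
  simp only [gridDist] at i1 i2
  omega

set_option maxHeartbeats 1000000 in
private lemma grid_key {r s : ℕ} (S : Finset (Fin r × Fin s))
    (hgp : isGPSetD (gridDist (r := r) (s := s)) ↑S)
    (x : Fin r × Fin s) (hx : x ∈ S)
    (hc1 : (x.1 : ℕ) = 0 ∨ (x.1 : ℕ) = r - 1)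
    (hc2 : (x.2 : ℕ) = 0 ∨ (x.2 : ℕ) = s - 1)
    (p q t : Fin r × Fin s) (hp : p ∈ S) (hq : q ∈ S) (ht : t ∈ S)
    (hpx : p ≠ x) (hqx : q ≠ x) (htx : t ≠ x)
    (hpq : p ≠ q) (hqt : q ≠ t) (hpt : p ≠ t)
    (h1 : ((p.1 : ℤ) - x.1).natAbs ≤ ((q.1 : ℤ) - x.1).natAbs)
    (h2 : ((q.1 : ℤ) - x.1).natAbs ≤ ((t.1 : ℤ) - x.1).natAbs) : False := by
  obtain ⟨a1, b1⟩ := grid_pair S hgp x hx hc1 hc2 p q hp hq hpx hqx hpq h1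
  obtain ⟨a2, b2⟩ := grid_pair S hgp x hx hc1 hc2 q t hq ht hqx htx hqt h2
  have hr1 : (p.1 : ℕ) < r := p.1.isLt
  have hr2 : (q.1 : ℕ) < r := q.1.isLt
  have hr3 : (t.1 : ℕ) < r := t.1.isLt
  have hr4 : (x.1 : ℕ) < r := x.1.isLt
  have hs1 : (p.2 : ℕ) < s := p.2.isLt
  have hs2 : (q.2 : ℕ) < s := q.2.isLt
  have hs3 : (t.2 : ℕ) < s := t.2.isLt
  have hs4 : (x.2 : ℕ) < s := x.2.isLt
  have hpS : p ∈ (S : Set _) := hp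
  have hqS : q ∈ (S : Set _) := hq
  have htS : t ∈ (S : Set _) := ht
  have i7 := hgp p hpS t htS q hqS hpt hqt.symm hpq
  simp only [gridDist] at i7
  omega

theorem stmt_16 (r s : ℕ) (hr : 2 ≤ r) (hs : 2 ≤ s) (S : Finset (Fin r × Fin s))
    (hgp : isGPSetD (gridDist (r := r) (s := s)) ↑S)
    (x : Fin r × Fin s) (hx : x ∈ S)
    (hcorner : ((x.1 : ℕ) = 0 ∨ (x.1 : ℕ) = r - 1) ∧ ((x.2 : ℕ) = 0 ∨ (x.2 : ℕ) = s - 1)) :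
    S.card ≤ 3 := by
  by_contra hcard
  push_neg at hcard
  have h3 : 2 < (S.erase x).card := by
    have := S.card_erase_of_mem hx; omega
  obtain ⟨u, v, w, hu, hv, hw, huv, huw, hvw⟩ := Finset.two_lt_card_iff.mp h3
  obtain ⟨hux, hu⟩ := Finset.mem_erase.mp hu
  obtain ⟨hvx, hv⟩ := Finset.mem_erase.mp hv
  obtain ⟨hwx, hw⟩ := Finset.mem_erase.mp hw
  obtain ⟨hc1, hc2⟩ := hcorner
  set A : Fin r × Fin s → ℕ := fun p => ((p.1 : ℤ) - x.1).natAbs with hA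
  rcases le_total (A u) (A v) with h1 | h1 <;>
  rcases le_total (A v) (A w) with h2 | h2 <;>
  rcases le_total (A u) (A w) with h3 | h3
  · exact grid_key S hgp x hx hc1 hc2 u v w hu hv hw hux hvx hwx huv hvw huw h1 h2
  · exact grid_key S hgp x hx hc1 hc2 u v w hu hv hw hux hvx hwx huv hvw huw h1 h2
  · exact grid_key S hgp x hx hc1 hc2 u w v hu hw hv hux hwx hvx huw hvw.symm huv h3 h2
  · exact grid_key S hgp x hx hc1 hc2 w u v hw hu hv hwx hux hvx huw.symm huv hvw.symm h3 h1
  · exact grid_key S hgp x hx hc1 hc2 v u w hv hu hw hvx hux hwx huv.symm huw hvw h1 h3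
  · exact grid_key S hgp x hx hc1 hc2 v w u hv hw hu hvx hwx hux hvw huw.symm huv.symm h2 h3
  · exact grid_key S hgp x hx hc1 hc2 w v u hw hv hu hwx hvx hux hvw.symm huv.symm huw.symm h2 h1
  · exact grid_key S hgp x hx hc1 hc2 w v u hw hv hu hwx hvx hux hvw.symm huv.symm huw.symm h2 h1
end
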